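/- Let G be a 2-connected cubic graph with a minimal 3-edge cut E_0 = {e_1, e_2, e_3} such that one component of G − E_0 is isomorphic to P = P_10 − z. Then for every f-matching M of G, the graph P − M (M restricted to edges of P) is connected. -/

import Mathlib

open SimpleGraph

/-- Degree of a vertex, via the cardinality of its neighbor set. -/
noncomputable def hdeg {V : Type*} (G : SimpleGraph V) (v : V) : ℕ :=
  {w | G.Adj v w}.ncard

/-- A cubic graph: every vertex has degree 3. -/
def IsCubic {V : Type*} (G : SimpleGraph V) : Prop := ∀ v, hdeg G v = 3

/-- A 2-connected graph: at least 3 vertices and deleting any vertex leaves it connected. -/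
def TwoConnected {V : Type*} (G : SimpleGraph V) : Prop :=
  3 ≤ Nat.card V ∧ ∀ v : V, (G.induce {v}ᶜ).Connected

/-- A 3-connected graph: at least 4 vertices and deleting any two vertices leaves it connected. -/
def ThreeConnected {V : Type*} (G : SimpleGraph V) : Prop :=
  4 ≤ Nat.card V ∧ ∀ v w : V, v ≠ w → (G.induce ({v, w} : Set V)ᶜ).Connected

/-- Edge list of the Petersen graph on `Fin 10` (vertex 9 has neighbors 4, 6, 7). -/
def petEdges : List (Fin 10 × Fin 10) :=
  [(0,1),(1,2),(2,3),(3,4),(4,0),(0,5),(1,6),(2,7),(3,8),(4,9),(5,7),(7,9),(9,6),(6,8),(8,5)]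

/-- The Petersen graph `P₁₀`. -/
def Pet : SimpleGraph (Fin 10) := SimpleGraph.fromRel (fun a b => (a, b) ∈ petEdges)

/-- Edge list of `P = P₁₀ - z` on `Fin 9` (where `z` was vertex 9);
its three 2-valent vertices are 4, 6, 7. -/
def pEdges : List (Fin 9 × Fin 9) :=
  [(0,1),(1,2),(2,3),(3,4),(4,0),(0,5),(1,6),(2,7),(3,8),(5,7),(6,8),(8,5)]

/-- The graph `P = P₁₀ - z`, the Petersen graph minus one vertex. -/
def Pgr : SimpleGraph (Fin 9) := SimpleGraph.fromRel (fun a b => (a, b) ∈ pEdges)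

/-- The three 2-valent vertices of `P` (as targets of the port assignment). -/
def portIdx : ℕ → Fin 9
  | 0 => 4
  | 1 => 6
  | _ => 7

/-- Port assignment: to which 2-valent vertex of the copy of `P` replacing `u` the
neighbor `v` of `u` gets attached (neighbors are ordered by the injective encoding `enc`). -/
noncomputable def port {V : Type*} (G : SimpleGraph V) (enc : V → ℕ) (u v : V) : Fin 9 :=
  portIdx (Nat.card {w : V | G.Adj u w ∧ enc w < enc v})

/-- Simultaneous `P`-inflation at every vertex of `G`. -/
noncomputable def inflate {V : Type*} (G : SimpleGraph V) (enc : V → ℕ) :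
    SimpleGraph (V × Fin 9) where
  Adj a b :=
    (a.1 = b.1 ∧ Pgr.Adj a.2 b.2) ∨
    (G.Adj a.1 b.1 ∧ a.2 = port G enc a.1 b.1 ∧ b.2 = port G enc b.1 a.1)
  symm := by
    constructor
    rintro a b (⟨h1, h2⟩ | ⟨h1, h2, h3⟩)
    · exact Or.inl ⟨h1.symm, h2.symm⟩
    · exact Or.inr ⟨h1.symm, h3, h2⟩
  loopless := by
    constructor
    rintro a (⟨-, h⟩ | ⟨h, -, -⟩)
    · exact Pgr.irrefl h
    · exact G.irrefl h

/-- A graph bundled with an injective-style encoding of its vertices into `ℕ`. -/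
structure GE where
  V : Type
  G : SimpleGraph V
  enc : V → ℕ

/-- One round of simultaneous `P`-inflation. -/
noncomputable def step (A : GE) : GE :=
  ⟨A.V × Fin 9, inflate A.G A.enc, fun p => Nat.pair (A.enc p.1) p.2.val⟩

/-- The iterated Petersen graph `P₁₀ᵏ`. -/
noncomputable def ItP10 : ℕ → GE
  | 0 => ⟨Fin 10, Pet, Fin.val⟩
  | k + 1 => step (ItP10 k)

/-- The iterated graph `Pᵏ` (starting from `P = P₁₀ - z`). -/
noncomputable def ItP : ℕ → GE
  | 0 => ⟨Fin 9, Pgr, Fin.val⟩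
  | k + 1 => step (ItP k)

/-- The canonical copy of `P^{k-1}` in `P₁₀ᵏ` containing a given vertex,
recorded by the corresponding vertex of `P₁₀`. -/
noncomputable def baseOf : (k : ℕ) → (ItP10 k).V → Fin 10
  | 0 => id
  | k + 1 => fun p => baseOf k p.1

/-- The parameter `l(G)`: minimum over circuits `C` of the maximum over vertices `v`
of the distance `d(C, v)`. -/
noncomputable def ell {V : Type*} (G : SimpleGraph V) : ℕ :=
  sInf { n | ∃ (v : V) (w : G.Walk v v), w.IsCycle ∧ ∀ u : V, ∃ x ∈ w.support, G.dist x u ≤ n }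

/-- `M` is a matching of `G`: a set of edges of `G`, pairwise not sharing a vertex. -/
def IsMatchingSet {V : Type*} (G : SimpleGraph V) (M : Set (Sym2 V)) : Prop :=
  M ⊆ G.edgeSet ∧ ∀ e ∈ M, ∀ f ∈ M, e ≠ f → ∀ v : V, ¬(v ∈ e ∧ v ∈ f)

/-- Every connected component of `H` has an even number of vertices. -/
def EvenComponents {V : Type*} (H : SimpleGraph V) : Prop :=
  ∀ c : H.ConnectedComponent, Even c.supp.ncard

/-- An `f`-matching: a matching `M` such that every component of `G - M` is
2-connected and has an even number of vertices. -/
def IsFMatching {V : Type*} (G : SimpleGraph V) (M : Set (Sym2 V)) : Prop :=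
  IsMatchingSet G M ∧
    ∀ c : (G.deleteEdges M).ConnectedComponent,
      TwoConnected ((G.deleteEdges M).induce c.supp) ∧ Even c.supp.ncard

/-- A minimal edge cut of `G`: deleting it disconnects `G`, but deleting any
proper subset does not. -/
def IsMinEdgeCut {V : Type*} (G : SimpleGraph V) (E : Set (Sym2 V)) : Prop :=
  E ⊆ G.edgeSet ∧ ¬(G.deleteEdges E).Connected ∧
    ∀ F : Set (Sym2 V), F ⊂ E → (G.deleteEdges F).Connected

/-- `H` is a subdivision of `F`: the vertices of `F` embed into `H` and each edge of `F`
corresponds to a path in `H`, the paths being internally disjoint and covering `H`. -/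
def IsSubdivisionOf {W U : Type*} (H : SimpleGraph W) (F : SimpleGraph U) : Prop :=
  ∃ f : U ↪ W, ∃ p : ∀ u v : U, F.Adj u v → H.Walk (f u) (f v),
    (∀ u v h, (p u v h).IsPath) ∧
    (∀ u v h, ∀ w ∈ (p u v h).support, w ∈ Set.range f → w = f u ∨ w = f v) ∧
    (∀ e : Sym2 W, e ∈ H.edgeSet ↔ ∃ u v h, e ∈ (p u v h).edges) ∧
    (∀ w : W, w ∈ Set.range f ∨ ∃ u v h, w ∈ (p u v h).support) ∧
    (∀ u v h u' v' h', ∀ w : W,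
      w ∈ (p u v h).support → w ∈ (p u' v' h').support →
      w ∈ Set.range f ∨ (u = u' ∧ v = v') ∨ (u = v' ∧ v = u'))

/-- Each component of `F` is an even circuit or a 2-connected cubic graph. -/
def GoodFrameComponents {U : Type*} (F : SimpleGraph U) : Prop :=
  ∀ c : F.ConnectedComponent,
    ((F.induce c.supp).Connected ∧ (∀ v, hdeg (F.induce c.supp) v = 2) ∧ Even c.supp.ncard) ∨
    (TwoConnected (F.induce c.supp) ∧ IsCubic (F.induce c.supp))

/-- `F` is a frame of `G`. -/
def IsFrame {U V : Type*} (F : SimpleGraph U) (G : SimpleGraph V) : Prop :=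
  GoodFrameComponents F ∧
    ∃ H : SimpleGraph V, H ≤ G ∧ IsSubdivisionOf H F ∧ EvenComponents H

/-- A proper 3-edge-coloring of `G`. -/
def ProperEdgeColoring {V : Type*} (G : SimpleGraph V) (f : Sym2 V → Fin 3) : Prop :=
  ∀ u v w : V, G.Adj u v → G.Adj u w → v ≠ w → f s(u, v) ≠ f s(u, w)

/-- The spanning subgraph of edges whose color is different from `c`
(i.e. the union of the other two color classes). -/
def twoClassSub {V : Type*} (G : SimpleGraph V) (f : Sym2 V → Fin 3) (c : Fin 3) :
    SimpleGraph V where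
  Adj u v := G.Adj u v ∧ f s(u, v) ≠ c
  symm := by
    constructor
    rintro u v ⟨h1, h2⟩
    exact ⟨h1.symm, by rwa [Sym2.eq_swap]⟩
  loopless := ⟨fun v h => G.irrefl h.1⟩

/-- A Kotzig graph: a cubic graph with a proper 3-edge-coloring in which any two
color classes form a hamiltonian circuit. -/
def IsKotzig {V : Type*} (G : SimpleGraph V) : Prop :=
  IsCubic G ∧ ∃ f : Sym2 V → Fin 3, ProperEdgeColoring G f ∧
    ∀ c : Fin 3, (twoClassSub G f c).Connected ∧ ∀ v, hdeg (twoClassSub G f c) v = 2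

/-- The family `Fam` is an even subdivision-factor of `G`. -/
def IsEvenSubdivFactor {ι : Type*} (Fam : ι → Σ n : ℕ, SimpleGraph (Fin n))
    {V : Type*} (G : SimpleGraph V) : Prop :=
  ∃ H : SimpleGraph V, H ≤ G ∧ ∀ c : H.ConnectedComponent,
    Even c.supp.ncard ∧ ∃ i, IsSubdivisionOf (H.induce c.supp) (Fam i).2


/-! ### Auxiliary machinery for STATEMENT 10 -/

section Stmt10Aux

lemma pgr_adj_iff (i j : Fin 9) : Pgr.Adj i j ↔ i ≠ j ∧ ((i, j) ∈ pEdges ∨ (j, i) ∈ pEdges) :=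
  SimpleGraph.fromRel_adj _ i j

instance : DecidableRel Pgr.Adj := fun i j => decidable_of_iff' _ (pgr_adj_iff i j)

def peA : Fin 12 → Fin 9 := ![0,1,2,3,4,0,1,2,3,5,6,8]
def peB : Fin 12 → Fin 9 := ![1,2,3,4,0,5,6,7,8,7,8,5]

def nbrMask (m : ℕ) (i : ℕ) : ℕ :=
  (List.finRange 12).foldl (fun acc k =>
    if !m.testBit k.val && ((peA k).val == i || (peB k).val == i) then
      acc ||| (if (peA k).val == i then 1 <<< (peB k).val else 1 <<< (peA k).val)
    else acc) 0

def stepMask (m r : ℕ) : ℕ :=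
  (List.range 9).foldl (fun acc i => if r.testBit i then acc ||| nbrMask m i else acc) r

def reachMask (m : ℕ) : ℕ :=
  stepMask m (stepMask m (stepMask m (stepMask m (stepMask m (stepMask m (stepMask m (stepMask m 1)))))))

def touchB (k k' : Fin 12) : Bool :=
  peA k == peA k' || peA k == peB k' || peB k == peA k' || peB k == peB k'

def matchOKN (m : ℕ) : Bool :=
  (List.finRange 12).all fun k => (List.finRange 12).all fun k' =>
    !(decide (k ≠ k') && touchB k k' && m.testBit k.val && m.testBit k'.val)

def goodN (m : ℕ) : Bool :=
  !(matchOKN m) || (reachMask m == 511) || decide (m ∈ [1541, 2185, 1066, 786, 2132, 480])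

def allBelow (f : ℕ → Bool) : ℕ → Bool
  | 0 => true
  | n+1 => allBelow f n && f n

theorem allBelow_spec (f : ℕ → Bool) : ∀ n, allBelow f n = true → ∀ m, m < n → f m = true := by
  intro n
  induction n with
  | zero => intro _ m hm; omega
  | succ n ih =>
    intro h m hm
    rw [allBelow, Bool.and_eq_true] at h
    rcases Nat.lt_succ_iff_lt_or_eq.mp hm with h' | h'
    · exact ih h.1 m h'
    · subst h'; exact h.2

set_option maxRecDepth 1000000 in
set_option maxHeartbeats 2000000 in
theorem chunk0 : allBelow (fun m => goodN (0*512+m)) 512 = true := by rfl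
set_option maxRecDepth 1000000 in
set_option maxHeartbeats 2000000 in
theorem chunk1 : allBelow (fun m => goodN (1*512+m)) 512 = true := by rfl
set_option maxRecDepth 1000000 in
set_option maxHeartbeats 2000000 in
theorem chunk2 : allBelow (fun m => goodN (2*512+m)) 512 = true := by rfl
set_option maxRecDepth 1000000 in
set_option maxHeartbeats 2000000 in
theorem chunk3 : allBelow (fun m => goodN (3*512+m)) 512 = true := by rfl
set_option maxRecDepth 1000000 in
set_option maxHeartbeats 2000000 in
theorem chunk4 : allBelow (fun m => goodN (4*512+m)) 512 = true := by rfl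
set_option maxRecDepth 1000000 in
set_option maxHeartbeats 2000000 in
theorem chunk5 : allBelow (fun m => goodN (5*512+m)) 512 = true := by rfl
set_option maxRecDepth 1000000 in
set_option maxHeartbeats 2000000 in
theorem chunk6 : allBelow (fun m => goodN (6*512+m)) 512 = true := by rfl
set_option maxRecDepth 1000000 in
set_option maxHeartbeats 2000000 in
theorem chunk7 : allBelow (fun m => goodN (7*512+m)) 512 = true := by rfl

theorem coreN : ∀ m, m < 4096 → goodN m = true := by
  have h : ∀ c m', c < 8 → m' < 512 → goodN (c*512+m') = true := by
    intro c m' hc hm'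
    interval_cases c
    · exact allBelow_spec _ _ chunk0 m' hm'
    · exact allBelow_spec _ _ chunk1 m' hm'
    · exact allBelow_spec _ _ chunk2 m' hm'
    · exact allBelow_spec _ _ chunk3 m' hm'
    · exact allBelow_spec _ _ chunk4 m' hm'
    · exact allBelow_spec _ _ chunk5 m' hm'
    · exact allBelow_spec _ _ chunk6 m' hm'
    · exact allBelow_spec _ _ chunk7 m' hm'
  intro m hm
  have h2 := h (m / 512) (m % 512) (by omega) (by omega)
  have e : m / 512 * 512 + m % 512 = m := by omega
  rwa [e] at h2

lemma foldl_or_testBit {alpha : Type*} (p : alpha → Bool) (g : alpha → ℕ) :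
    ∀ (l : List alpha) (r : ℕ) (j : ℕ),
      ((l.foldl (fun acc x => if p x then acc ||| g x else acc) r).testBit j = true ↔
        (r.testBit j = true ∨ ∃ x ∈ l, p x = true ∧ (g x).testBit j = true)) := by
  intro l
  induction l with
  | nil => simp
  | cons a l ih =>
    intro r j
    simp only [List.foldl_cons]
    rw [ih]
    by_cases hp : p a = true
    · simp only [hp, if_true, Nat.testBit_or, Bool.or_eq_true, List.mem_cons]
      constructor
      · rintro ((h | h) | ⟨x, hx, h1, h2⟩)
        · exact Or.inl h
        · exact Or.inr ⟨a, Or.inl rfl, hp, h⟩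
        · exact Or.inr ⟨x, Or.inr hx, h1, h2⟩
      · rintro (h | ⟨x, (rfl | hx), h1, h2⟩)
        · exact Or.inl (Or.inl h)
        · exact Or.inl (Or.inr h2)
        · exact Or.inr ⟨x, hx, h1, h2⟩
    · simp only [hp, if_false, List.mem_cons]
      constructor
      · rintro (h | ⟨x, hx, h1, h2⟩)
        · exact Or.inl h
        · exact Or.inr ⟨x, Or.inr hx, h1, h2⟩
      · rintro (h | ⟨x, (rfl | hx), h1, h2⟩)
        · exact Or.inl h
        · exact absurd h1 hp
        · exact Or.inr ⟨x, hx, h1, h2⟩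

lemma foldl_or_lt {alpha : Type*} (p : alpha → Bool) (g : alpha → ℕ)
    (hg : ∀ x, g x < 2 ^ 12) :
    ∀ (l : List alpha) (r : ℕ), r < 2 ^ 12 →
      (l.foldl (fun acc x => if p x then acc ||| g x else acc) r) < 2 ^ 12 := by
  intro l
  induction l with
  | nil => intro r hr; simpa using hr
  | cons a l ih =>
    intro r hr
    simp only [List.foldl_cons]
    by_cases hp : p a = true
    · simp only [hp, if_true]
      exact ih _ (Nat.or_lt_two_pow hr (hg a))
    · simp only [hp, if_false]
      exact ih _ hr

lemma testBit_one_shift (t j : ℕ) : (1 <<< t).testBit j = true ↔ j = t := by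
  rw [Nat.testBit_shiftLeft]
  simp only [Bool.and_eq_true, decide_eq_true_eq, Nat.testBit_one_eq_true_iff_self_eq_zero]
  omega

def encodeM (b : Fin 12 → Bool) : ℕ :=
  (List.finRange 12).foldl (fun acc k => if b k then acc ||| (1 <<< k.val) else acc) 0

lemma encode_testBit (b : Fin 12 → Bool) (k : Fin 12) : (encodeM b).testBit k.val = b k := by
  have h := foldl_or_testBit (p := b) (g := fun k : Fin 12 => 1 <<< k.val)
    (List.finRange 12) 0 k.val
  rw [encodeM]
  cases hb : b k with
  | true =>
    exact h.mpr (Or.inr ⟨k, List.mem_finRange k, hb, (testBit_one_shift _ _).mpr rfl⟩)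
  | false =>
    rw [Bool.eq_false_iff]
    intro ht
    rcases h.mp ht with h0 | ⟨x, _, hx, hs⟩
    · simp [Nat.zero_testBit] at h0
    · have hkx : k = x := Fin.ext ((testBit_one_shift _ _).mp hs)
      rw [hkx, hx] at hb
      simp at hb

lemma encode_lt (b : Fin 12 → Bool) : encodeM b < 4096 := by
  have h := foldl_or_lt (p := b) (g := fun k : Fin 12 => 1 <<< k.val)
    (fun x => by
      show (1:ℕ) <<< x.val < 2 ^ 12
      rw [Nat.one_shiftLeft]
      calc (2:ℕ) ^ x.val ≤ 2 ^ 11 := Nat.pow_le_pow_right (by norm_num) (by omega)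
      _ < 2 ^ 12 := by norm_num)
    (List.finRange 12) 0 (by norm_num)
  simpa [encodeM] using h

lemma walk_closed {W : Type*} {Gr : SimpleGraph W} (R : W → Prop)
    (hstep : ∀ x y, Gr.Adj x y → R x → R y) :
    ∀ {u v : W}, Gr.Walk u v → R u → R v := by
  intro u v w
  induction w with
  | nil => exact id
  | cons h _ ih => exact fun hu => ih (hstep _ _ h hu)

lemma reach_closed {W : Type*} {Gr : SimpleGraph W} (R : W → Prop)
    (hstep : ∀ x y, Gr.Adj x y → R x → R y) {u v : W} (h : Gr.Reachable u v) :
    R u → R v :=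
  h.elim fun w => walk_closed R hstep w

lemma reach_transfer {W : Type*} {A B : SimpleGraph W}
    (h : ∀ x y, B.Adj x y → A.Reachable x y) {u v : W} (w : B.Walk u v) :
    A.Reachable u v := by
  induction w with
  | nil => exact SimpleGraph.Reachable.refl _
  | cons ha _ ih => exact (h _ _ ha).trans ih

lemma nbr_cover {V : Type} [Fintype V] {G : SimpleGraph V} (hG : IsCubic G)
    {x a b c : V} (hab : a ≠ b) (hac : a ≠ c) (hbc : b ≠ c)
    (ha : G.Adj x a) (hb : G.Adj x b) (hc : G.Adj x c) :
    ∀ y, G.Adj x y → y = a ∨ y = b ∨ y = c := by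
  have hsub : ({a, b, c} : Set V) ⊆ {w | G.Adj x w} := by
    intro y hy
    rcases hy with h | h | h <;> simp_all
  have h3 : ({a, b, c} : Set V).ncard = 3 := by
    rw [Set.ncard_insert_of_notMem (by simp [hab, hac]),
      Set.ncard_insert_of_notMem (by simp [hbc]), Set.ncard_singleton]
  have hx := hG x
  simp only [hdeg] at hx
  have heq := Set.eq_of_subset_of_ncard_le hsub (by rw [hx, h3]) (Set.toFinite _)
  intro y hy
  have : y ∈ ({a, b, c} : Set V) := heq ▸ hy
  simpa using this

lemma nbr_third {V : Type} [Fintype V] {G : SimpleGraph V} (hG : IsCubic G)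
    {x a b : V} (hab : a ≠ b) (ha : G.Adj x a) (hb : G.Adj x b) :
    ∃ y, G.Adj x y ∧ y ≠ a ∧ y ≠ b := by
  by_contra h
  push_neg at h
  have hsub : {w | G.Adj x w} ⊆ ({a, b} : Set V) := by
    intro y hy
    by_cases h1 : y = a
    · simp [h1]
    · simp [h y hy h1]
  have hle : ({w | G.Adj x w}).ncard ≤ 2 := by
    calc ({w | G.Adj x w}).ncard ≤ ({a, b} : Set V).ncard :=
        Set.ncard_le_ncard hsub (Set.toFinite _)
    _ ≤ 2 := by
        rw [Set.ncard_insert_of_notMem (by simp [hab]), Set.ncard_singleton]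
  have hx := hG x
  simp only [hdeg] at hx
  rw [hx] at hle
  omega

lemma five_contra {V : Type} [Fintype V] {G : SimpleGraph V} {M : Set (Sym2 V)}
    (hM : IsFMatching G M) {a0 a1 a2 a3 a4 : V}
    (d01 : a0 ≠ a1) (d02 : a0 ≠ a2) (d03 : a0 ≠ a3) (d04 : a0 ≠ a4)
    (d12 : a1 ≠ a2) (d13 : a1 ≠ a3) (d14 : a1 ≠ a4)
    (d23 : a2 ≠ a3) (d24 : a2 ≠ a4) (d34 : a3 ≠ a4)
    (e01 : (G.deleteEdges M).Adj a0 a1) (e12 : (G.deleteEdges M).Adj a1 a2)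
    (e23 : (G.deleteEdges M).Adj a2 a3) (e34 : (G.deleteEdges M).Adj a3 a4)
    (e40 : (G.deleteEdges M).Adj a4 a0)
    (n1 : ∀ y, (G.deleteEdges M).Adj a1 y → y = a0 ∨ y = a2)
    (n2 : ∀ y, (G.deleteEdges M).Adj a2 y → y = a1 ∨ y = a3)
    (n3 : ∀ y, (G.deleteEdges M).Adj a3 y → y = a2 ∨ y = a4)
    (n4 : ∀ y, (G.deleteEdges M).Adj a4 y → y = a3 ∨ y = a0)
    (n0 : (∀ y, (G.deleteEdges M).Adj a0 y → y = a1 ∨ y = a4) ∨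
      ∃ y0, y0 ∉ ({a0, a1, a2, a3, a4} : Set V) ∧ (G.deleteEdges M).Adj a0 y0 ∧
        ∀ y, (G.deleteEdges M).Adj a0 y → y = a1 ∨ y = a4 ∨ y = y0) :
    False := by
  set H := G.deleteEdges M with hH
  rcases n0 with hclosed | ⟨y0, hy0S, hy0adj, hcov⟩
  · -- closed case : component of a0 is exactly the 5-cycle, odd
    set K := H.connectedComponentMk a0 with hK
    have hstep : ∀ x y, H.Adj x y → x ∈ ({a0, a1, a2, a3, a4} : Set V) →
        y ∈ ({a0, a1, a2, a3, a4} : Set V) := by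
      intro x y hxy hx
      simp only [Set.mem_insert_iff, Set.mem_singleton_iff] at hx ⊢
      rcases hx with rfl | rfl | rfl | rfl | rfl
      · rcases hclosed y hxy with rfl | rfl <;> tauto
      · rcases n1 y hxy with rfl | rfl <;> tauto
      · rcases n2 y hxy with rfl | rfl <;> tauto
      · rcases n3 y hxy with rfl | rfl <;> tauto
      · rcases n4 y hxy with rfl | rfl <;> tauto
    have hsub : K.supp ⊆ ({a0, a1, a2, a3, a4} : Set V) := by
      intro x hx
      have hr : H.Reachable a0 x :=
        (ConnectedComponent.exact ((K.mem_supp_iff x).mp hx)).symm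
      exact reach_closed _ hstep hr (by simp)
    have hsup : ({a0, a1, a2, a3, a4} : Set V) ⊆ K.supp := by
      intro x hx
      simp only [Set.mem_insert_iff, Set.mem_singleton_iff] at hx
      have h0 : a0 ∈ K.supp := by simp [hK]
      rcases hx with rfl | rfl | rfl | rfl | rfl
      · exact h0
      · rw [K.mem_supp_iff]
        exact ConnectedComponent.sound e01.symm.reachable
      · rw [K.mem_supp_iff]
        exact ConnectedComponent.sound (e12.symm.reachable.trans e01.symm.reachable)
      · rw [K.mem_supp_iff]
        exact ConnectedComponent.sound (e34.reachable.trans e40.reachable)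
      · rw [K.mem_supp_iff]
        exact ConnectedComponent.sound e40.reachable
    have hKS : K.supp = ({a0, a1, a2, a3, a4} : Set V) := le_antisymm hsub hsup
    have heven := (hM.2 K).2
    rw [hKS] at heven
    have h5 : ({a0, a1, a2, a3, a4} : Set V).ncard = 5 := by
      rw [Set.ncard_insert_of_notMem (by simp [d01, d02, d03, d04]),
        Set.ncard_insert_of_notMem (by simp [d12, d13, d14]),
        Set.ncard_insert_of_notMem (by simp [d23, d24]),
        Set.ncard_insert_of_notMem (by simp [d34]), Set.ncard_singleton]
    rw [h5] at heven
    simp [Nat.even_iff] at heven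
  · -- open case : a0 is a cut vertex of its 2-connected component
    set K := H.connectedComponentMk a0 with hK
    have h0K : a0 ∈ K.supp := by simp [hK]
    have h1K : a1 ∈ K.supp := by
      rw [K.mem_supp_iff]; exact ConnectedComponent.sound e01.symm.reachable
    have hyK : y0 ∈ K.supp := by
      rw [K.mem_supp_iff]; exact ConnectedComponent.sound hy0adj.symm.reachable
    have h2conn := (hM.2 K).1
    set v : ↥K.supp := ⟨a0, h0K⟩ with hv
    have hconn := h2conn.2 v
    have hy0ne : y0 ≠ a0 := by intro h; apply hy0S; simp [h]
    have h1ne : a1 ≠ a0 := d01.symm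
    have hm1 : (⟨a1, h1K⟩ : ↥K.supp) ∈ ({v}ᶜ : Set ↥K.supp) := by
      simp [hv, Subtype.ext_iff, h1ne]
    have hmy : (⟨y0, hyK⟩ : ↥K.supp) ∈ ({v}ᶜ : Set ↥K.supp) := by
      simp [hv, Subtype.ext_iff, hy0ne]
    set u1 : ↥({v}ᶜ : Set ↥K.supp) := ⟨⟨a1, h1K⟩, hm1⟩ with hu1
    set uy : ↥({v}ᶜ : Set ↥K.supp) := ⟨⟨y0, hyK⟩, hmy⟩ with huy
    have hreach := hconn.preconnected u1 uy
    have hR : ((↑(↑uy : ↥K.supp) : V)) ∈ ({a1, a2, a3, a4} : Set V) := by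
      refine reach_closed (Gr := (H.induce K.supp).induce ({v}ᶜ : Set ↥K.supp))
        (fun z => ((z : ↥K.supp) : V) ∈ ({a1, a2, a3, a4} : Set V)) ?_ hreach (by simp [hu1])
      intro x y hxy hx
      have hadj : H.Adj ((x : ↥K.supp) : V) ((y : ↥K.supp) : V) := hxy
      have hyne : ((y : ↥K.supp) : V) ≠ a0 := by
        intro h
        have hyv : (y : ↥K.supp) = v := Subtype.ext (by simpa [hv] using h)
        have h2 := y.2
        rw [hyv] at h2
        simp at h2
      simp only [Set.mem_insert_iff, Set.mem_singleton_iff] at hx ⊢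
      rcases hx with hx | hx | hx | hx
      · rcases n1 _ (hx ▸ hadj) with h | h
        · exact absurd h hyne
        · tauto
      · rcases n2 _ (hx ▸ hadj) with h | h <;> tauto
      · rcases n3 _ (hx ▸ hadj) with h | h <;> tauto
      · rcases n4 _ (hx ▸ hadj) with h | h
        · tauto
        · exact absurd h hyne
    apply hy0S
    simp only [Set.mem_insert_iff, Set.mem_singleton_iff] at hR ⊢
    tauto

lemma bad_case {V : Type} [Fintype V] {G : SimpleGraph V} (hG : IsCubic G)
    {M : Set (Sym2 V)} (hM : IsFMatching G M) {S : Set V}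
    (φ : Fin 9 → V) (hφinj : Function.Injective φ) (hφmem : ∀ i, φ i ∈ S)
    (hadjP : ∀ i j, G.Adj (φ i) (φ j) ↔ Pgr.Adj i j)
    (hadj_supp : ∀ (i : Fin 9) (y : V), G.Adj (φ i) y → y ∈ S → ∃ l, φ l = y ∧ Pgr.Adj i l)
    (p w1 w2 w3 w4 x1 x2 x3 x4 : Fin 9)
    (hcyc : Pgr.Adj p w1 ∧ Pgr.Adj w1 w2 ∧ Pgr.Adj w2 w3 ∧ Pgr.Adj w3 w4 ∧ Pgr.Adj w4 p)
    (hd : p ≠ w1 ∧ p ≠ w2 ∧ p ≠ w3 ∧ p ≠ w4 ∧ w1 ≠ w2 ∧ w1 ≠ w3 ∧ w1 ≠ w4 ∧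
      w2 ≠ w3 ∧ w2 ≠ w4 ∧ w3 ≠ w4)
    (hxd : (x1 ≠ p ∧ x1 ≠ w2) ∧ (x2 ≠ w1 ∧ x2 ≠ w3) ∧ (x3 ≠ w2 ∧ x3 ≠ w4) ∧
      (x4 ≠ w3 ∧ x4 ≠ p))
    (hnp : (∀ l, Pgr.Adj p l → l = w1 ∨ l = w4) ∧
      (∀ l, Pgr.Adj w1 l → l = p ∨ l = w2 ∨ l = x1) ∧
      (∀ l, Pgr.Adj w2 l → l = w1 ∨ l = w3 ∨ l = x2) ∧
      (∀ l, Pgr.Adj w3 l → l = w2 ∨ l = w4 ∨ l = x3) ∧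
      (∀ l, Pgr.Adj w4 l → l = w3 ∨ l = p ∨ l = x4))
    (hMc : s(φ p, φ w1) ∉ M ∧ s(φ w1, φ w2) ∉ M ∧ s(φ w2, φ w3) ∉ M ∧
      s(φ w3, φ w4) ∉ M ∧ s(φ w4, φ p) ∉ M)
    (hMx : s(φ w1, φ x1) ∈ M ∧ s(φ w2, φ x2) ∈ M ∧ s(φ w3, φ x3) ∈ M ∧ s(φ w4, φ x4) ∈ M) :
    False := by
  obtain ⟨c01, c12, c23, c34, c40⟩ := hcyc
  obtain ⟨d01, d02, d03, d04, d12, d13, d14, d23, d24, d34⟩ := hd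
  obtain ⟨⟨hx1p, hx1w2⟩, ⟨hx2w1, hx2w3⟩, ⟨hx3w2, hx3w4⟩, ⟨hx4w3, hx4p⟩⟩ := hxd
  obtain ⟨np, nw1, nw2, nw3, nw4⟩ := hnp
  obtain ⟨m01, m12, m23, m34, m40⟩ := hMc
  obtain ⟨mx1, mx2, mx3, mx4⟩ := hMx
  have hφne : ∀ {i j : Fin 9}, i ≠ j → φ i ≠ φ j := fun h => fun hc => h (hφinj hc)
  -- G-adjacency of the matched partners
  have gx1 : G.Adj (φ w1) (φ x1) := (G.mem_edgeSet).mp (hM.1.1 mx1)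
  have gx2 : G.Adj (φ w2) (φ x2) := (G.mem_edgeSet).mp (hM.1.1 mx2)
  have gx3 : G.Adj (φ w3) (φ x3) := (G.mem_edgeSet).mp (hM.1.1 mx3)
  have gx4 : G.Adj (φ w4) (φ x4) := (G.mem_edgeSet).mp (hM.1.1 mx4)
  -- H-adjacency of cycle edges
  have e01 : (G.deleteEdges M).Adj (φ p) (φ w1) :=
    SimpleGraph.deleteEdges_adj.mpr ⟨(hadjP _ _).mpr c01, m01⟩
  have e12 : (G.deleteEdges M).Adj (φ w1) (φ w2) :=
    SimpleGraph.deleteEdges_adj.mpr ⟨(hadjP _ _).mpr c12, m12⟩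
  have e23 : (G.deleteEdges M).Adj (φ w2) (φ w3) :=
    SimpleGraph.deleteEdges_adj.mpr ⟨(hadjP _ _).mpr c23, m23⟩
  have e34 : (G.deleteEdges M).Adj (φ w3) (φ w4) :=
    SimpleGraph.deleteEdges_adj.mpr ⟨(hadjP _ _).mpr c34, m34⟩
  have e40 : (G.deleteEdges M).Adj (φ w4) (φ p) :=
    SimpleGraph.deleteEdges_adj.mpr ⟨(hadjP _ _).mpr c40, m40⟩
  -- neighbour characterizations in H for w1..w4
  have n1 : ∀ y, (G.deleteEdges M).Adj (φ w1) y → y = φ p ∨ y = φ w2 := by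
    intro y hy
    rw [SimpleGraph.deleteEdges_adj] at hy
    have hcov := nbr_cover hG (hφne d02) (hφne hx1p.symm) (hφne hx1w2.symm)
      ((hadjP _ _).mpr c01.symm) ((hadjP _ _).mpr c12) gx1 y hy.1
    rcases hcov with rfl | rfl | rfl
    · exact Or.inl rfl
    · exact Or.inr rfl
    · exact absurd mx1 hy.2
  have n2 : ∀ y, (G.deleteEdges M).Adj (φ w2) y → y = φ w1 ∨ y = φ w3 := by
    intro y hy
    rw [SimpleGraph.deleteEdges_adj] at hy
    have hcov := nbr_cover hG (hφne d13) (hφne hx2w1.symm) (hφne hx2w3.symm)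
      ((hadjP _ _).mpr c12.symm) ((hadjP _ _).mpr c23) gx2 y hy.1
    rcases hcov with rfl | rfl | rfl
    · exact Or.inl rfl
    · exact Or.inr rfl
    · exact absurd mx2 hy.2
  have n3 : ∀ y, (G.deleteEdges M).Adj (φ w3) y → y = φ w2 ∨ y = φ w4 := by
    intro y hy
    rw [SimpleGraph.deleteEdges_adj] at hy
    have hcov := nbr_cover hG (hφne d24) (hφne hx3w2.symm) (hφne hx3w4.symm)
      ((hadjP _ _).mpr c23.symm) ((hadjP _ _).mpr c34) gx3 y hy.1
    rcases hcov with rfl | rfl | rfl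
    · exact Or.inl rfl
    · exact Or.inr rfl
    · exact absurd mx3 hy.2
  have n4 : ∀ y, (G.deleteEdges M).Adj (φ w4) y → y = φ w3 ∨ y = φ p := by
    intro y hy
    rw [SimpleGraph.deleteEdges_adj] at hy
    have hcov := nbr_cover hG (hφne (fun h => d03 h.symm)) (hφne hx4w3.symm)
      (hφne hx4p.symm)
      ((hadjP _ _).mpr c34.symm) ((hadjP _ _).mpr c40) gx4 y hy.1
    rcases hcov with rfl | rfl | rfl
    · exact Or.inl rfl
    · exact Or.inr rfl
    · exact absurd mx4 hy.2
  -- the port vertex p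
  obtain ⟨y0, hGy0, hy01, hy04⟩ :=
    nbr_third hG (hφne d14) ((hadjP _ _).mpr c01) ((hadjP _ _).mpr c40.symm)
  have hy0nS : y0 ∉ S := by
    intro hmem
    obtain ⟨l, hl, hPl⟩ := hadj_supp p y0 hGy0 hmem
    rcases np l hPl with rfl | rfl
    · exact hy01 hl.symm
    · exact hy04 hl.symm
  have hcovp := nbr_cover hG (hφne d14) hy01.symm hy04.symm
    ((hadjP _ _).mpr c01) ((hadjP _ _).mpr c40.symm) hGy0
  have hn0 : (∀ y, (G.deleteEdges M).Adj (φ p) y → y = φ w1 ∨ y = φ w4) ∨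
      ∃ z, z ∉ ({φ p, φ w1, φ w2, φ w3, φ w4} : Set V) ∧ (G.deleteEdges M).Adj (φ p) z ∧
        ∀ y, (G.deleteEdges M).Adj (φ p) y → y = φ w1 ∨ y = φ w4 ∨ y = z := by
    by_cases hy0M : s(φ p, y0) ∈ M
    · left
      intro y hy
      rw [SimpleGraph.deleteEdges_adj] at hy
      rcases hcovp y hy.1 with rfl | rfl | rfl
      · exact Or.inl rfl
      · exact Or.inr rfl
      · exact absurd hy0M hy.2
    · right
      refine ⟨y0, ?_, SimpleGraph.deleteEdges_adj.mpr ⟨hGy0, hy0M⟩, ?_⟩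
      · intro hmem
        rcases hmem with h | h | h | h | h <;> exact hy0nS (h ▸ hφmem _)
      · intro y hy
        rw [SimpleGraph.deleteEdges_adj] at hy
        rcases hcovp y hy.1 with rfl | rfl | rfl
        · exact Or.inl rfl
        · exact Or.inr (Or.inl rfl)
        · exact Or.inr (Or.inr rfl)
  exact five_contra hM (hφne d01) (hφne d02) (hφne d03) (hφne d04) (hφne d12) (hφne d13)
    (hφne d14) (hφne d23) (hφne d24) (hφne d34) e01 e12 e23 e34 e40 n1 n2 n3 n4 hn0

lemma hpeAdj : ∀ k : Fin 12, Pgr.Adj (peA k) (peB k) := by decide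

lemma reach_sound (Q : SimpleGraph (Fin 9)) (m : ℕ)
    (hadj : ∀ (k : Fin 12), m.testBit k.val = false → Q.Adj (peA k) (peB k))
    (hfull : reachMask m = 511) : ∀ j : Fin 9, Q.Reachable 0 j := by
  have hnbr : ∀ (i j : Fin 9), (nbrMask m i.val).testBit j.val = true → Q.Adj i j := by
    intro i j h
    rw [nbrMask, foldl_or_testBit] at h
    rcases h with h | ⟨k, _, hp, hg⟩
    · simp [Nat.zero_testBit] at h
    · rw [Bool.and_eq_true, Bool.not_eq_true'] at hp
      obtain ⟨hm, hor⟩ := hp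
      by_cases hA : ((peA k).val == i.val) = true
      · have hAi : peA k = i := Fin.ext (by rwa [beq_iff_eq] at hA)
        rw [if_pos hA] at hg
        have hBj : peB k = j := Fin.ext ((testBit_one_shift _ _).mp hg).symm
        rw [← hAi, ← hBj]
        exact hadj k hm
      · have hB : ((peB k).val == i.val) = true := by
          rw [Bool.or_eq_true] at hor
          tauto
        have hBi : peB k = i := Fin.ext (by rwa [beq_iff_eq] at hB)
        rw [if_neg hA] at hg
        have hAj : peA k = j := Fin.ext ((testBit_one_shift _ _).mp hg).symm
        rw [← hBi, ← hAj]
        exact (hadj k hm).symm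
  have hstep : ∀ r, (∀ i : Fin 9, r.testBit i.val = true → Q.Reachable 0 i) →
      ∀ i : Fin 9, (stepMask m r).testBit i.val = true → Q.Reachable 0 i := by
    intro r hr j h
    rw [stepMask, foldl_or_testBit] at h
    rcases h with h | ⟨i, hi, hp, hg⟩
    · exact hr j h
    · have hi9 : i < 9 := List.mem_range.mp hi
      exact (hr ⟨i, hi9⟩ hp).trans (hnbr ⟨i, hi9⟩ j hg).reachable
  have h1 : ∀ i : Fin 9, (1 : ℕ).testBit i.val = true → Q.Reachable 0 i := by
    intro i h
    rw [Nat.testBit_one_eq_true_iff_self_eq_zero] at h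
    have hi0 : i = 0 := Fin.ext h
    rw [hi0]
  have h8 := hstep _ (hstep _ (hstep _ (hstep _ (hstep _ (hstep _ (hstep _ (hstep _ h1)))))))
  have hfull' : stepMask m (stepMask m (stepMask m (stepMask m (stepMask m (stepMask m
      (stepMask m (stepMask m 1))))))) = 511 := hfull
  have h511 : ∀ j : Fin 9, (511 : ℕ).testBit j.val = true := by decide
  intro j
  exact h8 j (by rw [hfull']; exact h511 j)


end Stmt10Aux

/-- if one side of a minimal 3-edge cut `E₀` of a 2-connected cubic
graph `G` is a copy of `P = P₁₀ - z`, then for every `f`-matching `M` of `G` the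
graph `P - M` is connected. -/
theorem stmt_10 {V : Type} [Fintype V] (G : SimpleGraph V) (hG : IsCubic G)
    (h2 : TwoConnected G) (E0 : Set (Sym2 V)) (hE : IsMinEdgeCut G E0)
    (hcard : E0.ncard = 3) (c : (G.deleteEdges E0).ConnectedComponent)
    (hiso : Nonempty (((G.deleteEdges E0).induce c.supp) ≃g Pgr))
    (M : Set (Sym2 V)) (hM : IsFMatching G M) :
    ((G.deleteEdges M).induce c.supp).Connected := by
  classical
  obtain ⟨e⟩ := hiso
  let φ : Fin 9 → V := fun i => ((e.symm i : ↥c.supp) : V)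
  have hφmem : ∀ i, φ i ∈ c.supp := fun i => (e.symm i).2
  have hφinj : Function.Injective φ := by
    intro i j h
    exact e.symm.toEquiv.injective (Subtype.ext h)
  have hφe : ∀ a : ↥c.supp, φ (e a) = (a : V) := by
    intro a
    show ((e.symm (e a) : ↥c.supp) : V) = a
    rw [RelIso.symm_apply_apply]
  have hsuppreach : ∀ x y : V, x ∈ c.supp → y ∈ c.supp →
      (G.deleteEdges E0).Reachable x y := by
    intro x y hx hy
    apply SimpleGraph.ConnectedComponent.exact
    rw [(c.mem_supp_iff x).mp hx, (c.mem_supp_iff y).mp hy]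
  have hnotE0 : ∀ i j : Fin 9, s(φ i, φ j) ∉ E0 := by
    intro i j hmem
    have hss : E0 \ {s(φ i, φ j)} ⊂ E0 := Set.sdiff_singleton_ssubset.mpr hmem
    have hc' := hE.2.2 _ hss
    apply hE.2.1
    rw [SimpleGraph.connected_iff] at hc' ⊢
    refine ⟨?_, hc'.2⟩
    intro u v
    refine (hc'.1 u v).elim fun w => ?_
    refine reach_transfer ?_ w
    intro x y hxy
    rw [SimpleGraph.deleteEdges_adj] at hxy
    obtain ⟨hxyG, hnm⟩ := hxy
    by_cases hE0' : s(x, y) ∈ E0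
    · have heq : s(x, y) = s(φ i, φ j) := by
        by_contra hne
        exact hnm ⟨hE0', hne⟩
      rcases Sym2.eq_iff.mp heq with ⟨hx1, hy1⟩ | ⟨hx1, hy1⟩ <;> subst hx1 <;> subst hy1
      · exact hsuppreach _ _ (hφmem i) (hφmem j)
      · exact hsuppreach _ _ (hφmem j) (hφmem i)
    · exact (SimpleGraph.deleteEdges_adj.mpr ⟨hxyG, hE0'⟩).reachable
  have hadjP : ∀ i j : Fin 9, G.Adj (φ i) (φ j) ↔ Pgr.Adj i j := by
    intro i j
    constructor
    · intro h
      have hd : (G.deleteEdges E0).Adj (φ i) (φ j) :=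
        SimpleGraph.deleteEdges_adj.mpr ⟨h, hnotE0 i j⟩
      have hind : ((G.deleteEdges E0).induce c.supp).Adj (e.symm i) (e.symm j) := hd
      exact e.symm.map_rel_iff.mp hind
    · intro h
      have hind := e.symm.map_rel_iff.mpr h
      have hd : (G.deleteEdges E0).Adj (φ i) (φ j) := hind
      exact (SimpleGraph.deleteEdges_adj.mp hd).1
  have hadj_supp : ∀ (i : Fin 9) (y : V), G.Adj (φ i) y → y ∈ c.supp →
      ∃ l, φ l = y ∧ Pgr.Adj i l := by
    intro i y hy hmem
    refine ⟨e ⟨y, hmem⟩, hφe _, ?_⟩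
    rw [← hadjP, hφe ⟨y, hmem⟩]
    exact hy
  let b : Fin 12 → Bool := fun k => decide (s(φ (peA k), φ (peB k)) ∈ M)
  have hb : ∀ k, b k = true ↔ s(φ (peA k), φ (peB k)) ∈ M := by
    intro k
    constructor
    · exact fun h => of_decide_eq_true h
    · exact fun h => decide_eq_true h
  have hbit : ∀ k : Fin 12, (encodeM b).testBit k.val = b k := fun k => encode_testBit b k
  have hIn : ∀ k : Fin 12, (encodeM b).testBit k.val = true →
      s(φ (peA k), φ (peB k)) ∈ M := by
    intro k hk
    exact (hb k).mp (by rw [← hbit k]; exact hk)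
  have hOut : ∀ k : Fin 12, (encodeM b).testBit k.val = false →
      s(φ (peA k), φ (peB k)) ∉ M := by
    intro k hk hmem
    have h1 := (hb k).mpr hmem
    rw [← hbit k, hk] at h1
    simp at h1
  have hedge_ne : ∀ k k' : Fin 12, k ≠ k' →
      (s(peA k, peB k) : Sym2 (Fin 9)) ≠ s(peA k', peB k') := by decide
  have hOK : matchOKN (encodeM b) = true := by
    rw [matchOKN, List.all_eq_true]
    intro k _
    rw [List.all_eq_true]
    intro k' _
    rw [Bool.not_eq_true']
    by_cases hkk : k = k'
    · simp [hkk]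
    by_cases ht : touchB k k' = true
    swap
    · simp [Bool.eq_false_iff.mpr ht]
    by_cases hk1 : (encodeM b).testBit k.val = true
    swap
    · simp [Bool.eq_false_iff.mpr hk1]
    by_cases hk2 : (encodeM b).testBit k'.val = true
    swap
    · simp [Bool.eq_false_iff.mpr hk2]
    exfalso
    have m1 := hIn k hk1
    have m2 := hIn k' hk2
    have hdist : s(φ (peA k), φ (peB k)) ≠ s(φ (peA k'), φ (peB k')) := by
      rw [← Sym2.map_pair_eq φ, ← Sym2.map_pair_eq φ]
      intro h
      exact hedge_ne k k' hkk (Sym2.map.injective hφinj h)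
    have hsh : ∃ a : Fin 9, (a = peA k ∨ a = peB k) ∧ (a = peA k' ∨ a = peB k') := by
      rw [touchB] at ht
      simp only [Bool.or_eq_true, beq_iff_eq] at ht
      rcases ht with ((h | h) | h) | h
      · exact ⟨peA k, Or.inl rfl, Or.inl h⟩
      · exact ⟨peA k, Or.inl rfl, Or.inr h⟩
      · exact ⟨peB k, Or.inr rfl, Or.inl h⟩
      · exact ⟨peB k, Or.inr rfl, Or.inr h⟩
    obtain ⟨a, ha1, ha2⟩ := hsh
    have hm1 : φ a ∈ s(φ (peA k), φ (peB k)) := by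
      rcases ha1 with h | h <;> rw [h] <;> simp [Sym2.mem_iff]
    have hm2 : φ a ∈ s(φ (peA k'), φ (peB k')) := by
      rcases ha2 with h | h <;> rw [h] <;> simp [Sym2.mem_iff]
    exact hM.1.2 _ m1 _ m2 hdist (φ a) ⟨hm1, hm2⟩
  have hgood := coreN (encodeM b) (encode_lt b)
  rw [goodN, hOK] at hgood
  simp only [Bool.not_true, Bool.false_or, Bool.or_eq_true, beq_iff_eq, decide_eq_true_eq,
    List.mem_cons, List.mem_singleton, List.not_mem_nil, or_false] at hgood
  rcases hgood with hfull | hbad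
  · -- the good case : P - M is connected
    let Q : SimpleGraph (Fin 9) :=
      { Adj := fun i j => Pgr.Adj i j ∧ s(φ i, φ j) ∉ M
        symm := by
          constructor
          rintro i j ⟨h1, h2⟩
          exact ⟨h1.symm, by rwa [Sym2.eq_swap]⟩
        loopless := ⟨fun i h => Pgr.irrefl h.1⟩ }
    have hadjQ : ∀ k : Fin 12, (encodeM b).testBit k.val = false → Q.Adj (peA k) (peB k) :=
      fun k hk => ⟨hpeAdj k, hOut k hk⟩
    have hQreach := reach_sound Q (encodeM b) hadjQ hfull
    have hQconn : Q.Connected := (SimpleGraph.connected_iff Q).mpr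
      ⟨fun i j => (hQreach i).symm.trans (hQreach j), ⟨0⟩⟩
    have hiso2 : ((G.deleteEdges M).induce c.supp) ≃g Q := by
      refine ⟨e.toEquiv, ?_⟩
      intro a b'
      show Q.Adj (e a) (e b') ↔ _
      have h1 : φ (e a) = (a : V) := hφe a
      have h2 : φ (e b') = (b' : V) := hφe b'
      constructor
      · rintro ⟨hp, hnm⟩
        have hg : G.Adj (φ (e a)) (φ (e b')) := (hadjP _ _).mpr hp
        rw [h1, h2] at hg
        rw [h1, h2] at hnm
        exact SimpleGraph.deleteEdges_adj.mpr ⟨hg, hnm⟩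
      · intro h
        have hd : (G.deleteEdges M).Adj (a : V) (b' : V) := h
        rw [SimpleGraph.deleteEdges_adj] at hd
        refine ⟨(hadjP _ _).mp ?_, ?_⟩
        · rw [h1, h2]
          exact hd.1
        · rw [h1, h2]
          exact hd.2
    exact hiso2.connected_iff.mpr hQconn
  · -- the six bad matchings are impossible for an f-matching
    exfalso
    rcases hbad with h | h | h | h | h | h
    · exact bad_case hG hM φ hφinj hφmem hadjP hadj_supp 4 0 5 8 3 1 7 6 2
        (by decide) (by decide) (by decide) (by decide)
        ⟨hOut 4 (by rw [h]; decide), hOut 5 (by rw [h]; decide),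
          (by rw [Sym2.eq_swap]; exact hOut 11 (by rw [h]; decide)),
          (by rw [Sym2.eq_swap]; exact hOut 8 (by rw [h]; decide)),
          hOut 3 (by rw [h]; decide)⟩
        ⟨hIn 0 (by rw [h]; decide), hIn 9 (by rw [h]; decide),
          (by rw [Sym2.eq_swap]; exact hIn 10 (by rw [h]; decide)),
          (by rw [Sym2.eq_swap]; exact hIn 2 (by rw [h]; decide))⟩
    · exact bad_case hG hM φ hφinj hφmem hadjP hadj_supp 6 1 2 3 8 0 7 4 5
        (by decide) (by decide) (by decide) (by decide)
        ⟨(by rw [Sym2.eq_swap]; exact hOut 6 (by rw [h]; decide)),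
          hOut 1 (by rw [h]; decide), hOut 2 (by rw [h]; decide),
          hOut 8 (by rw [h]; decide),
          (by rw [Sym2.eq_swap]; exact hOut 10 (by rw [h]; decide))⟩
        ⟨(by rw [Sym2.eq_swap]; exact hIn 0 (by rw [h]; decide)),
          hIn 7 (by rw [h]; decide), hIn 3 (by rw [h]; decide),
          hIn 11 (by rw [h]; decide)⟩
    · exact bad_case hG hM φ hφinj hφmem hadjP hadj_supp 7 2 3 8 5 1 4 6 0
        (by decide) (by decide) (by decide) (by decide)
        ⟨(by rw [Sym2.eq_swap]; exact hOut 7 (by rw [h]; decide)),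
          hOut 2 (by rw [h]; decide), hOut 8 (by rw [h]; decide),
          hOut 11 (by rw [h]; decide), hOut 9 (by rw [h]; decide)⟩
        ⟨(by rw [Sym2.eq_swap]; exact hIn 1 (by rw [h]; decide)),
          hIn 3 (by rw [h]; decide),
          (by rw [Sym2.eq_swap]; exact hIn 10 (by rw [h]; decide)),
          (by rw [Sym2.eq_swap]; exact hIn 5 (by rw [h]; decide))⟩
    · exact bad_case hG hM φ hφinj hφmem hadjP hadj_supp 6 1 0 5 8 2 4 7 3
        (by decide) (by decide) (by decide) (by decide)
        ⟨(by rw [Sym2.eq_swap]; exact hOut 6 (by rw [h]; decide)),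
          (by rw [Sym2.eq_swap]; exact hOut 0 (by rw [h]; decide)),
          hOut 5 (by rw [h]; decide),
          (by rw [Sym2.eq_swap]; exact hOut 11 (by rw [h]; decide)),
          (by rw [Sym2.eq_swap]; exact hOut 10 (by rw [h]; decide))⟩
        ⟨hIn 1 (by rw [h]; decide),
          (by rw [Sym2.eq_swap]; exact hIn 4 (by rw [h]; decide)),
          hIn 9 (by rw [h]; decide),
          (by rw [Sym2.eq_swap]; exact hIn 8 (by rw [h]; decide))⟩
    · exact bad_case hG hM φ hφinj hφmem hadjP hadj_supp 7 2 1 0 5 3 6 4 8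
        (by decide) (by decide) (by decide) (by decide)
        ⟨(by rw [Sym2.eq_swap]; exact hOut 7 (by rw [h]; decide)),
          (by rw [Sym2.eq_swap]; exact hOut 1 (by rw [h]; decide)),
          (by rw [Sym2.eq_swap]; exact hOut 0 (by rw [h]; decide)),
          hOut 5 (by rw [h]; decide), hOut 9 (by rw [h]; decide)⟩
        ⟨hIn 2 (by rw [h]; decide), hIn 6 (by rw [h]; decide),
          (by rw [Sym2.eq_swap]; exact hIn 4 (by rw [h]; decide)),
          (by rw [Sym2.eq_swap]; exact hIn 11 (by rw [h]; decide))⟩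
    · exact bad_case hG hM φ hφinj hφmem hadjP hadj_supp 4 0 1 2 3 5 6 7 8
        (by decide) (by decide) (by decide) (by decide)
        ⟨hOut 4 (by rw [h]; decide), hOut 0 (by rw [h]; decide),
          hOut 1 (by rw [h]; decide), hOut 2 (by rw [h]; decide),
          hOut 3 (by rw [h]; decide)⟩
        ⟨hIn 5 (by rw [h]; decide), hIn 6 (by rw [h]; decide),
          hIn 7 (by rw [h]; decide), hIn 8 (by rw [h]; decide)⟩
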